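/- Let M ∈ ℝ^{m×n} have unit-norm columns and satisfy the RIP of order 2k with constant δ ∈ (0,1). Let x ∈ ℝⁿ have support L with |L| = k, let y₀ = Mx ≠ 0, let w ∈ ℝᵐ, and let y = y₀ + w. Let T ⊆ {1,…,n} with |T| = k and T ∩ L = ∅. Then there exists an index j ∈ T such that |⟨R_{T∖j} m_(j), y⟩| / ‖R_{T∖j} m_(j)‖ ≤ (δ‖y₀‖ + ‖P_T w‖) / √(k(1−δ)). -/

import Mathlib

open Matrix

noncomputable section

/-- `M` satisfies the RIP of order `s` with constant `δ` if
`(1−δ)‖v‖² ≤ ‖Mv‖² ≤ (1+δ)‖v‖²` for every `v` with at most `s` nonzero entries. -/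
def RIP {m n : ℕ} (M : Matrix (Fin m) (Fin n) ℝ) (s : ℕ) (δ : ℝ) : Prop :=
  ∀ v : Fin n → ℝ, (∃ S : Finset (Fin n), S.card ≤ s ∧ ∀ i ∉ S, v i = 0) →
    (1 - δ) * (v ⬝ᵥ v) ≤ (M *ᵥ v) ⬝ᵥ (M *ᵥ v) ∧
      (M *ᵥ v) ⬝ᵥ (M *ᵥ v) ≤ (1 + δ) * (v ⬝ᵥ v)

/-- `M_T`: the submatrix of `M` of the columns indexed by `T`. -/
def colsOf {m n : ℕ} (M : Matrix (Fin m) (Fin n) ℝ) (T : Finset (Fin n)) :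
    Matrix (Fin m) {i // i ∈ T} ℝ :=
  M.submatrix id fun j => (j : Fin n)

/-- `P_T = M_T (M_TᵀM_T)⁻¹ M_Tᵀ`. -/
def projT {m n : ℕ} (M : Matrix (Fin m) (Fin n) ℝ) (T : Finset (Fin n)) :
    Matrix (Fin m) (Fin m) ℝ :=
  colsOf M T * ((colsOf M T)ᵀ * colsOf M T)⁻¹ * (colsOf M T)ᵀ

/-- `R_T = I − P_T`. -/
def residT {m n : ℕ} (M : Matrix (Fin m) (Fin n) ℝ) (T : Finset (Fin n)) :
    Matrix (Fin m) (Fin m) ℝ :=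
  1 - projT M T

/-- The Euclidean norm of a vector. -/
def nrm {ι : Type} [Fintype ι] (v : ι → ℝ) : ℝ := Real.sqrt (v ⬝ᵥ v)

namespace RIPaux

lemma dot_self_nonneg {ι : Type} [Fintype ι] (v : ι → ℝ) : 0 ≤ v ⬝ᵥ v :=
  Finset.sum_nonneg fun i _ => mul_self_nonneg (v i)

lemma nrm_nonneg {ι : Type} [Fintype ι] (v : ι → ℝ) : 0 ≤ nrm v := Real.sqrt_nonneg _

lemma nrm_sq {ι : Type} [Fintype ι] (v : ι → ℝ) : nrm v ^ 2 = v ⬝ᵥ v :=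
  Real.sq_sqrt (dot_self_nonneg v)

lemma dot_le_nrm_mul_nrm {ι : Type} [Fintype ι] (a b : ι → ℝ) : a ⬝ᵥ b ≤ nrm a * nrm b := by
  have cs : (a ⬝ᵥ b) ^ 2 ≤ (a ⬝ᵥ a) * (b ⬝ᵥ b) := by
    have := Finset.sum_mul_sq_le_sq_mul_sq Finset.univ a b
    simpa [dotProduct, pow_two] using this
  calc a ⬝ᵥ b ≤ |a ⬝ᵥ b| := le_abs_self _
    _ = Real.sqrt ((a ⬝ᵥ b) ^ 2) := (Real.sqrt_sq_eq_abs _).symm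
    _ ≤ Real.sqrt ((a ⬝ᵥ a) * (b ⬝ᵥ b)) := Real.sqrt_le_sqrt cs
    _ = nrm a * nrm b := Real.sqrt_mul (dot_self_nonneg a) _

lemma nrm_add_le {ι : Type} [Fintype ι] (a b : ι → ℝ) : nrm (a + b) ≤ nrm a + nrm b := by
  have h : (a + b) ⬝ᵥ (a + b) ≤ (nrm a + nrm b) ^ 2 := by
    have h1 : (a + b) ⬝ᵥ (a + b) = a ⬝ᵥ a + 2 * (a ⬝ᵥ b) + b ⬝ᵥ b := by
      rw [add_dotProduct, dotProduct_add, dotProduct_add, dotProduct_comm b a]; ring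
    have h2 := dot_le_nrm_mul_nrm a b
    have h3 := nrm_sq a
    have h4 := nrm_sq b
    nlinarith [nrm_nonneg a, nrm_nonneg b]
  calc nrm (a + b) = Real.sqrt ((a+b) ⬝ᵥ (a+b)) := rfl
    _ ≤ Real.sqrt ((nrm a + nrm b)^2) := Real.sqrt_le_sqrt h
    _ = nrm a + nrm b := Real.sqrt_sq (add_nonneg (nrm_nonneg a) (nrm_nonneg b))


variable {m n : ℕ}

def ext0 (S : Finset (Fin n)) (z : {i // i ∈ S} → ℝ) : Fin n → ℝ :=
  fun i => if h : i ∈ S then z ⟨i, h⟩ else 0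

lemma ext0_support (S : Finset (Fin n)) (z : {i // i ∈ S} → ℝ) :
    ∀ i ∉ S, ext0 S z i = 0 := fun _ hi => dif_neg hi

lemma mulVec_ext0 (M : Matrix (Fin m) (Fin n) ℝ) (S : Finset (Fin n))
    (z : {i // i ∈ S} → ℝ) : M *ᵥ ext0 S z = colsOf M S *ᵥ z := by
  funext r
  show ∑ i, M r i * ext0 S z i = ∑ i : {i // i ∈ S}, colsOf M S r i * z i
  have hz : ∑ i, M r i * ext0 S z i = ∑ i ∈ S, M r i * ext0 S z i :=
    (Finset.sum_subset (Finset.subset_univ S)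
      (fun i _ hi => by simp [ext0_support S z i hi])).symm
  rw [hz, Finset.univ_eq_attach, ← Finset.sum_attach S (fun i => M r i * ext0 S z i)]
  refine Finset.sum_congr rfl fun i _ => ?_
  simp [ext0, colsOf, i.2]

lemma dot_ext0 (S : Finset (Fin n)) (z : {i // i ∈ S} → ℝ) :
    ext0 S z ⬝ᵥ ext0 S z = z ⬝ᵥ z := by
  show ∑ i, ext0 S z i * ext0 S z i = ∑ i : {i // i ∈ S}, z i * z i
  have hz : ∑ i, ext0 S z i * ext0 S z i = ∑ i ∈ S, ext0 S z i * ext0 S z i :=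
    (Finset.sum_subset (Finset.subset_univ S)
      (fun i _ hi => by simp [ext0_support S z i hi])).symm
  rw [hz, Finset.univ_eq_attach, ← Finset.sum_attach S (fun i => ext0 S z i * ext0 S z i)]
  refine Finset.sum_congr rfl fun i _ => ?_
  simp [ext0, i.2]


lemma dot_trans {ι κ : Type} [Fintype ι] [Fintype κ] (A : Matrix ι κ ℝ)
    (u : κ → ℝ) (v : ι → ℝ) : (A *ᵥ u) ⬝ᵥ v = u ⬝ᵥ (Aᵀ *ᵥ v) := by
  rw [dotProduct_comm, Matrix.dotProduct_mulVec, ← Matrix.mulVec_transpose,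
    dotProduct_comm]

variable {k : ℕ} {M : Matrix (Fin m) (Fin n) ℝ} {δ : ℝ} {S : Finset (Fin n)}

lemma dot_pos_of_ne {ι : Type} [Fintype ι] {v : ι → ℝ} (hv : v ≠ 0) : 0 < v ⬝ᵥ v :=
  lt_of_le_of_ne (dot_self_nonneg v) (fun h => hv (dotProduct_self_eq_zero.mp h.symm))

lemma gram_posdef (hδ1 : δ < 1) (hRIP : RIP M (2 * k) δ) (hS : S.card ≤ 2 * k) :
    ((colsOf M S)ᵀ * colsOf M S).PosDef := by
  rw [Matrix.posDef_iff_dotProduct_mulVec]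
  constructor
  · simpa using Matrix.isHermitian_conjTranspose_mul_self (colsOf M S)
  · intro z hz
    have h1 : star z ⬝ᵥ (((colsOf M S)ᵀ * colsOf M S) *ᵥ z)
        = (colsOf M S *ᵥ z) ⬝ᵥ (colsOf M S *ᵥ z) := by
      rw [star_trivial, ← Matrix.mulVec_mulVec, ← dot_trans]
    rw [h1, ← mulVec_ext0 M S z]
    have hsupp : ∃ S' : Finset (Fin n), S'.card ≤ 2 * k ∧ ∀ i ∉ S', ext0 S z i = 0 :=
      ⟨S, hS, ext0_support S z⟩
    have hlow := (hRIP (ext0 S z) hsupp).1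
    rw [dot_ext0 S z] at hlow
    have hzz : 0 < z ⬝ᵥ z := dot_pos_of_ne hz
    calc (0:ℝ) < (1 - δ) * (z ⬝ᵥ z) := mul_pos (by linarith) hzz
      _ ≤ _ := hlow

lemma gram_unit_det (hδ1 : δ < 1) (hRIP : RIP M (2 * k) δ) (hS : S.card ≤ 2 * k) :
    IsUnit ((colsOf M S)ᵀ * colsOf M S).det :=
  (gram_posdef hδ1 hRIP hS).det_pos.ne'.isUnit

lemma proj_mul_cols (hd : IsUnit ((colsOf M S)ᵀ * colsOf M S).det) :
    projT M S * colsOf M S = colsOf M S := by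
  unfold projT
  rw [Matrix.mul_assoc, Matrix.mul_assoc, Matrix.nonsing_inv_mul _ hd, Matrix.mul_one]

lemma proj_transpose : (projT M S)ᵀ = projT M S := by
  unfold projT
  rw [Matrix.transpose_mul, Matrix.transpose_mul, Matrix.transpose_transpose,
    Matrix.transpose_nonsing_inv, Matrix.transpose_mul, Matrix.transpose_transpose,
    Matrix.mul_assoc]

lemma proj_idem (hd : IsUnit ((colsOf M S)ᵀ * colsOf M S).det) :
    projT M S * projT M S = projT M S := by
  conv_lhs => rw [show projT M S * projT M S
    = ((projT M S * colsOf M S) * ((colsOf M S)ᵀ * colsOf M S)⁻¹) * (colsOf M S)ᵀ by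
      unfold projT; simp only [Matrix.mul_assoc]]
  rw [proj_mul_cols hd]; rfl

lemma colsT_mul_proj (hd : IsUnit ((colsOf M S)ᵀ * colsOf M S).det) :
    (colsOf M S)ᵀ * projT M S = (colsOf M S)ᵀ := by
  have h := congrArg Matrix.transpose (proj_mul_cols hd)
  rwa [Matrix.transpose_mul, proj_transpose] at h


set_option maxHeartbeats 1600000 in
lemma hard_real (δ A B P Q : ℝ) (hδ0 : 0 < δ) (hδ1 : δ < 1) (hP : 0 ≤ P) (hQ : 0 < Q)
    (H : ∀ s t : ℝ, (1-δ)*(s^2*A+t^2*B) ≤ s^2*P+2*s*t*P+t^2*Q ∧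
        s^2*P+2*s*t*P+t^2*Q ≤ (1+δ)*(s^2*A+t^2*B)) : P ≤ δ^2*Q := by
  rcases hP.eq_or_lt with h0 | hP0
  · rw [← h0]; positivity
  have r1 : (1-δ)*A ≤ P := by linarith [(H 1 0).1]
  have r2 : P ≤ (1+δ)*A := by linarith [(H 1 0).2]
  have r3 : (1-δ)*B ≤ Q := by linarith [(H 0 1).1]
  have r4 : Q ≤ (1+δ)*B := by linarith [(H 0 1).2]
  have hA : 0 < A := by nlinarith
  have hB : 0 < B := by nlinarith
  have ha : 0 ≤ (1+δ)*A - P := by linarith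
  have hc : 0 ≤ (1+δ)*B - Q := by linarith
  have ha' : 0 ≤ P - (1-δ)*A := by linarith
  have hc' : 0 ≤ Q - (1-δ)*B := by linarith
  have h1 : P^2 ≤ ((1+δ)*A - P) * ((1+δ)*B - Q) := by
    rcases ha.eq_or_lt with heq | hlt
    · exfalso
      set s := ((1+δ)*B - Q + 1)/(2*P) with hs
      have hU := (H s 1).2
      have e1 : (1+δ)*A = P := by linarith
      have e2 : s^2*P = (1+δ)*(s^2*A) := by rw [← e1]; ring
      have key : 2*s*P ≤ (1+δ)*B - Q := by nlinarith [hU, e2]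
      have : 2*s*P = (1+δ)*B - Q + 1 := by rw [hs]; field_simp
      linarith
    · have hU := (H P ((1+δ)*A - P)).2
      nlinarith [hU, hlt]
  have h2 : P^2 ≤ (P - (1-δ)*A) * (Q - (1-δ)*B) := by
    rcases ha'.eq_or_lt with heq | hlt
    · exfalso
      set s := -((Q - (1-δ)*B + 1)/(2*P)) with hs
      have hV := (H s 1).1
      have e1 : (1-δ)*A = P := by linarith
      have e2 : s^2*P = (1-δ)*(s^2*A) := by rw [← e1]; ring
      have key : (1-δ)*B - Q ≤ 2*s*P := by nlinarith [hV, e2]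
      have : 2*s*P = -(Q - (1-δ)*B + 1) := by rw [hs]; field_simp
      linarith
    · have hV := (H P (-(P - (1-δ)*A))).1
      nlinarith [hV, hlt]
  clear H
  have key : P^2 ≤ δ^2*(P*Q) := by
    rcases le_total P A with hPA | hPA <;> rcases le_total Q B with hQB | hQB
    · have e1 : P - (1-δ)*A ≤ δ*P := by nlinarith
      have e2 : Q - (1-δ)*B ≤ δ*Q := by nlinarith
      have e3 : (P - (1-δ)*A) * (Q - (1-δ)*B) ≤ (δ*P) * (δ*Q) :=
        mul_le_mul e1 e2 hc' (by positivity)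
      calc P^2 ≤ (P - (1-δ)*A) * (Q - (1-δ)*B) := h2
        _ ≤ (δ*P) * (δ*Q) := e3
        _ = δ^2*(P*Q) := by ring
    · have t1 : (1-δ)/2*P^2 ≤ (1-δ)/2*(((1+δ)*A - P) * ((1+δ)*B - Q)) := by
        apply mul_le_mul_of_nonneg_left h1; linarith
      have t2 : (1+δ)/2*P^2 ≤ (1+δ)/2*((P - (1-δ)*A) * (Q - (1-δ)*B)) := by
        apply mul_le_mul_of_nonneg_left h2; linarith
      have t3 : 0 ≤ (1-δ^2)*((A-P)*(Q-B)) :=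
        mul_nonneg (by nlinarith) (mul_nonneg (by linarith) (by linarith))
      have idd : (1-δ)/2*(((1+δ)*A - P) * ((1+δ)*B - Q))
          + (1+δ)/2*((P - (1-δ)*A) * (Q - (1-δ)*B))
          + (1-δ^2)*((A-P)*(Q-B)) = δ^2*(P*Q) := by ring
      linarith [t1, t2, t3, idd]
    · have t1 : (1-δ)/2*P^2 ≤ (1-δ)/2*(((1+δ)*A - P) * ((1+δ)*B - Q)) := by
        apply mul_le_mul_of_nonneg_left h1; linarith
      have t2 : (1+δ)/2*P^2 ≤ (1+δ)/2*((P - (1-δ)*A) * (Q - (1-δ)*B)) := by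
        apply mul_le_mul_of_nonneg_left h2; linarith
      have t3 : 0 ≤ (1-δ^2)*((P-A)*(B-Q)) :=
        mul_nonneg (by nlinarith) (mul_nonneg (by linarith) (by linarith))
      have idd : (1-δ)/2*(((1+δ)*A - P) * ((1+δ)*B - Q))
          + (1+δ)/2*((P - (1-δ)*A) * (Q - (1-δ)*B))
          + (1-δ^2)*((P-A)*(B-Q)) = δ^2*(P*Q) := by ring
      linarith [t1, t2, t3, idd]
    · have e1 : (1+δ)*A - P ≤ δ*P := by nlinarith
      have e2 : (1+δ)*B - Q ≤ δ*Q := by nlinarith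
      have e3 : ((1+δ)*A - P) * ((1+δ)*B - Q) ≤ (δ*P) * (δ*Q) :=
        mul_le_mul e1 e2 hc (by positivity)
      calc P^2 ≤ ((1+δ)*A - P) * ((1+δ)*B - Q) := h1
        _ ≤ (δ*P) * (δ*Q) := e3
        _ = δ^2*(P*Q) := by ring
  by_contra hcon
  push_neg at hcon
  have := mul_lt_mul_of_pos_left hcon hP0
  nlinarith [key, this]


lemma proj_fix (hd : IsUnit ((colsOf M S)ᵀ * colsOf M S).det) {i : Fin n} (hi : i ∈ S) :
    projT M S *ᵥ (fun r => M r i) = fun r => M r i := by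
  have hcol : (fun r => M r i) = colsOf M S *ᵥ Pi.single ⟨i, hi⟩ 1 := by
    funext r
    rw [Matrix.mulVec_single]
    simp [colsOf]
  rw [hcol, Matrix.mulVec_mulVec, proj_mul_cols hd]

lemma resid_cols_zero (hd : IsUnit ((colsOf M S)ᵀ * colsOf M S).det) {i : Fin n} (hi : i ∈ S) :
    residT M S *ᵥ (fun r => M r i) = 0 := by
  rw [residT, Matrix.sub_mulVec, Matrix.one_mulVec, proj_fix hd hi, sub_self]

lemma resid_transpose : (residT M S)ᵀ = residT M S := by
  rw [residT, Matrix.transpose_sub, Matrix.transpose_one, proj_transpose]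

lemma resid_idem (hd : IsUnit ((colsOf M S)ᵀ * colsOf M S).det) :
    residT M S * residT M S = residT M S := by
  rw [residT, Matrix.sub_mul, Matrix.one_mul, Matrix.mul_sub, Matrix.mul_one, proj_idem hd]
  abel

lemma colsT_perp (hd : IsUnit ((colsOf M S)ᵀ * colsOf M S).det) (y : Fin m → ℝ) :
    (colsOf M S)ᵀ *ᵥ (y - projT M S *ᵥ y) = 0 := by
  rw [Matrix.mulVec_sub, Matrix.mulVec_mulVec, colsT_mul_proj hd, sub_self]

lemma col_dot_perp (hd : IsUnit ((colsOf M S)ᵀ * colsOf M S).det) (y : Fin m → ℝ)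
    {i : Fin n} (hi : i ∈ S) :
    (fun r => M r i) ⬝ᵥ (y - projT M S *ᵥ y) = 0 := by
  have h := congrFun (colsT_perp hd y) ⟨i, hi⟩
  simpa [Matrix.mulVec, dotProduct, colsOf, Matrix.transpose_apply, Matrix.submatrix] using h

lemma proj_perp_zero {S' : Finset (Fin n)} (hsub : S' ⊆ S)
    (hd : IsUnit ((colsOf M S)ᵀ * colsOf M S).det) (y : Fin m → ℝ) :
    projT M S' *ᵥ (y - projT M S *ᵥ y) = 0 := by
  have hz : (colsOf M S')ᵀ *ᵥ (y - projT M S *ᵥ y) = 0 := by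
    funext a
    have := col_dot_perp hd y (hsub a.2)
    simpa [Matrix.mulVec, dotProduct, colsOf, Matrix.transpose_apply, Matrix.submatrix,
      mul_comm] using this
  rw [projT, ← Matrix.mulVec_mulVec, ← Matrix.mulVec_mulVec, hz]
  simp


lemma resid_perp (hj : j ∈ S) (hdS : IsUnit ((colsOf M S)ᵀ * colsOf M S).det)
    (y : Fin m → ℝ) :
    (residT M (S.erase j) *ᵥ (fun r => M r j)) ⬝ᵥ (y - projT M S *ᵥ y) = 0 := by
  rw [dot_trans, resid_transpose]
  have h1 : residT M (S.erase j) *ᵥ (y - projT M S *ᵥ y) = y - projT M S *ᵥ y := by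
    rw [residT, Matrix.sub_mulVec, Matrix.one_mulVec,
      proj_perp_zero (Finset.erase_subset j S) hdS, sub_zero]
  rw [h1, col_dot_perp hdS y hj]

lemma uu_eq (hj : j ∈ S) (hdS' : IsUnit ((colsOf M (S.erase j))ᵀ * colsOf M (S.erase j)).det) :
    (residT M (S.erase j) *ᵥ (fun r => M r j)) ⬝ᵥ (residT M (S.erase j) *ᵥ (fun r => M r j))
      = (fun r => M r j) ⬝ᵥ (residT M (S.erase j) *ᵥ (fun r => M r j)) := by
  conv_lhs => rw [dot_trans, resid_transpose, Matrix.mulVec_mulVec, resid_idem hdS']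

lemma col_dot_u_zero (hj : j ∈ S) {i : Fin n} (hi : i ∈ S) (hij : i ≠ j)
    (hdS' : IsUnit ((colsOf M (S.erase j))ᵀ * colsOf M (S.erase j)).det) :
    (fun r => M r i) ⬝ᵥ (residT M (S.erase j) *ᵥ (fun r => M r j)) = 0 := by
  rw [dotProduct_comm, dot_trans, resid_transpose,
    resid_cols_zero hdS' (Finset.mem_erase.mpr ⟨hij, hi⟩)]
  simp

lemma uu_le_one (hunit : (fun r => M r j) ⬝ᵥ (fun r => M r j) = 1) (hj : j ∈ S)
    (hdS' : IsUnit ((colsOf M (S.erase j))ᵀ * colsOf M (S.erase j)).det) :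
    (residT M (S.erase j) *ᵥ (fun r => M r j)) ⬝ᵥ (residT M (S.erase j) *ᵥ (fun r => M r j))
      ≤ 1 := by
  set u := residT M (S.erase j) *ᵥ (fun r => M r j) with hu
  have h1 : u ⬝ᵥ u = (fun r => M r j) ⬝ᵥ u := uu_eq hj hdS'
  have h2 : (fun r => M r j) ⬝ᵥ u ≤ nrm (fun r => M r j) * nrm u :=
    dot_le_nrm_mul_nrm _ _
  have h3 : nrm (fun r => M r j) = 1 := by rw [nrm, hunit, Real.sqrt_one]
  rcases le_or_gt (u ⬝ᵥ u) 1 with h | h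
  · exact h
  · exfalso
    have h4 : Real.sqrt (u ⬝ᵥ u) < u ⬝ᵥ u :=
      (Real.sqrt_lt' (by linarith)).mpr (by nlinarith)
    have h5 : nrm u = Real.sqrt (u ⬝ᵥ u) := rfl
    rw [h3, one_mul, h5] at h2
    linarith

set_option maxHeartbeats 1600000 in
lemma resid_dot_eq (hj : j ∈ S) (hdS : IsUnit ((colsOf M S)ᵀ * colsOf M S).det)
    (hdS' : IsUnit ((colsOf M (S.erase j))ᵀ * colsOf M (S.erase j)).det)
    (y : Fin m → ℝ) :
    (residT M (S.erase j) *ᵥ (fun r => M r j)) ⬝ᵥ y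
      = (((colsOf M S)ᵀ * colsOf M S)⁻¹ *ᵥ ((colsOf M S)ᵀ *ᵥ y)) ⟨j, hj⟩
        * ((residT M (S.erase j) *ᵥ (fun r => M r j)) ⬝ᵥ
            (residT M (S.erase j) *ᵥ (fun r => M r j))) := by
  classical
  set u := residT M (S.erase j) *ᵥ (fun r => M r j) with hu
  set z := ((colsOf M S)ᵀ * colsOf M S)⁻¹ *ᵥ ((colsOf M S)ᵀ *ᵥ y) with hz
  have hPy : projT M S *ᵥ y = colsOf M S *ᵥ z := by
    rw [hz, projT]
    simp only [Matrix.mulVec_mulVec, Matrix.mul_assoc]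
  have hyy : projT M S *ᵥ y + (y - projT M S *ᵥ y) = y := by abel
  have hsplit : u ⬝ᵥ y = u ⬝ᵥ (projT M S *ᵥ y) + u ⬝ᵥ (y - projT M S *ᵥ y) := by
    rw [← dotProduct_add, hyy]
  rw [hsplit, resid_perp hj hdS y, add_zero, hPy]
  rw [dotProduct_comm, dot_trans]
  have hw : ∀ i : {i // i ∈ S}, ((colsOf M S)ᵀ *ᵥ u) i
      = (fun r => M r (i : Fin n)) ⬝ᵥ u := fun i => rfl
  have hexp : z ⬝ᵥ ((colsOf M S)ᵀ *ᵥ u)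
      = ∑ i : {i // i ∈ S}, z i * ((colsOf M S)ᵀ *ᵥ u) i := rfl
  rw [hexp, Finset.sum_eq_single (⟨j, hj⟩ : {i // i ∈ S})]
  · rw [hw, ← uu_eq hj hdS']
  · intro i _ hij
    have hne : (i : Fin n) ≠ j := fun hh => hij (Subtype.ext hh)
    rw [hw, col_dot_u_zero hj i.2 hne hdS', mul_zero]
  · intro h
    exact absurd (Finset.mem_univ _) h


lemma proj_self_dot (hd : IsUnit ((colsOf M S)ᵀ * colsOf M S).det) (v : Fin m → ℝ) :
    (projT M S *ᵥ v) ⬝ᵥ (projT M S *ᵥ v) = (projT M S *ᵥ v) ⬝ᵥ v := by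
  conv_lhs => rw [dot_trans, Matrix.mulVec_mulVec, proj_transpose, proj_idem hd]
  rw [dotProduct_comm]

lemma dot_combo {ι : Type} [Fintype ι] (s t : ℝ) (a b : ι → ℝ) :
    (s • a + t • b) ⬝ᵥ (s • a + t • b)
      = s^2*(a ⬝ᵥ a) + 2*s*t*(a ⬝ᵥ b) + t^2*(b ⬝ᵥ b) := by
  simp only [add_dotProduct, dotProduct_add, smul_dotProduct, dotProduct_smul,
    smul_eq_mul, dotProduct_comm b a]
  ring

lemma proj_y0_le {x : Fin n → ℝ} {L : Finset (Fin n)} (hδ0 : 0 < δ) (hδ1 : δ < 1)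
    (hRIP : RIP M (2 * k) δ) (hsupp : ∀ i, x i ≠ 0 ↔ i ∈ L)
    (hcard : S.card + L.card ≤ 2 * k) (hdisj : Disjoint S L)
    (hd : IsUnit ((colsOf M S)ᵀ * colsOf M S).det) (hy0ne : M *ᵥ x ≠ 0) :
    nrm (projT M S *ᵥ (M *ᵥ x)) ≤ δ * nrm (M *ᵥ x) := by
  classical
  set y0 := M *ᵥ x with hy0
  set z0 := ((colsOf M S)ᵀ * colsOf M S)⁻¹ *ᵥ ((colsOf M S)ᵀ *ᵥ y0) with hz0
  set c := ext0 S z0 with hc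
  have hMc : M *ᵥ c = projT M S *ᵥ y0 := by
    rw [hc, mulVec_ext0, hz0, projT]
    simp only [Matrix.mulVec_mulVec, Matrix.mul_assoc]
  set A := c ⬝ᵥ c with hA
  set B := x ⬝ᵥ x with hB
  set Pv := (projT M S *ᵥ y0) ⬝ᵥ (projT M S *ᵥ y0) with hPv
  set Q := y0 ⬝ᵥ y0 with hQdef
  have hxoff : ∀ i ∉ L, x i = 0 := fun i hi => by
    by_contra hxi; exact hi ((hsupp i).mp hxi)
  have hcross : (M *ᵥ c) ⬝ᵥ y0 = Pv := by rw [hMc, hPv, proj_self_dot hd]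
  have hcx : c ⬝ᵥ x = 0 := by
    apply Finset.sum_eq_zero
    intro i _
    by_cases hi : i ∈ S
    · rw [hxoff i (Finset.disjoint_left.mp hdisj hi), mul_zero]
    · rw [show c i = 0 from ext0_support S z0 i hi, zero_mul]
  have H : ∀ s t : ℝ, (1-δ)*(s^2*A+t^2*B) ≤ s^2*Pv+2*s*t*Pv+t^2*Q ∧
      s^2*Pv+2*s*t*Pv+t^2*Q ≤ (1+δ)*(s^2*A+t^2*B) := by
    intro s t
    have hsupp' : ∃ S' : Finset (Fin n), S'.card ≤ 2*k ∧ ∀ i ∉ S', (s • c + t • x) i = 0 := by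
      refine ⟨S ∪ L, le_trans (Finset.card_union_le _ _) hcard, fun i hi => ?_⟩
      have hiS : i ∉ S := fun h => hi (Finset.mem_union_left _ h)
      have hiL : i ∉ L := fun h => hi (Finset.mem_union_right _ h)
      simp [show c i = 0 from ext0_support S z0 i hiS, hxoff i hiL]
    have hv := hRIP (s • c + t • x) hsupp'
    have e1 : (s • c + t • x) ⬝ᵥ (s • c + t • x) = s^2*A+t^2*B := by
      rw [dot_combo, hcx, ← hA, ← hB]; ring
    have e2 : (M *ᵥ (s • c + t • x)) ⬝ᵥ (M *ᵥ (s • c + t • x))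
        = s^2*Pv+2*s*t*Pv+t^2*Q := by
      rw [Matrix.mulVec_add, Matrix.mulVec_smul, Matrix.mulVec_smul, dot_combo,
        hcross, ← hy0, ← hQdef]
      have : (M *ᵥ c) ⬝ᵥ (M *ᵥ c) = Pv := by rw [hMc, hPv]
      rw [this]
    rw [e1, e2] at hv
    exact hv
  have hfin : Pv ≤ δ^2*Q :=
    hard_real δ A B Pv Q hδ0 hδ1 (dot_self_nonneg _) (dot_pos_of_ne hy0ne) H
  have : nrm (projT M S *ᵥ y0) = Real.sqrt Pv := rfl
  rw [this]
  calc Real.sqrt Pv ≤ Real.sqrt (δ^2*Q) := Real.sqrt_le_sqrt hfin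
    _ = δ * nrm y0 := by
        rw [Real.sqrt_mul (sq_nonneg δ), Real.sqrt_sq hδ0.le]; rfl

end RIPaux

open RIPaux in
set_option maxHeartbeats 1600000 in
theorem stmt11 {m n k : ℕ} (M : Matrix (Fin m) (Fin n) ℝ) (δ : ℝ)
    (hδ0 : 0 < δ) (hδ1 : δ < 1)
    (hunit : ∀ j : Fin n, (fun r => M r j) ⬝ᵥ (fun r => M r j) = 1)
    (hRIP : RIP M (2 * k) δ)
    (x : Fin n → ℝ) (L : Finset (Fin n)) (hsupp : ∀ i, x i ≠ 0 ↔ i ∈ L)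
    (hL : L.card = k)
    (y0 : Fin m → ℝ) (hy0 : y0 = M *ᵥ x) (hy0ne : y0 ≠ 0)
    (w : Fin m → ℝ) (y : Fin m → ℝ) (hy : y = y0 + w)
    (T : Finset (Fin n)) (hT : T.card = k) (hdisj : Disjoint T L) :
    ∃ j ∈ T,
      |(residT M (T.erase j) *ᵥ fun r => M r j) ⬝ᵥ y| /
          nrm (residT M (T.erase j) *ᵥ fun r => M r j) ≤
        (δ * nrm y0 + nrm (projT M T *ᵥ w)) / Real.sqrt ((k : ℝ) * (1 - δ)) := by
  classical
  have hxne : x ≠ 0 := by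
    intro hx
    exact hy0ne (by rw [hy0, hx, Matrix.mulVec_zero])
  obtain ⟨i0, hi0⟩ := Function.ne_iff.mp hxne
  have hk : 0 < k := hL ▸ Finset.card_pos.mpr ⟨i0, (hsupp i0).mp hi0⟩
  have hTk : T.card ≤ 2 * k := by omega
  have hdT := gram_unit_det hδ1 hRIP hTk
  set z : {i // i ∈ T} → ℝ := ((colsOf M T)ᵀ * colsOf M T)⁻¹ *ᵥ ((colsOf M T)ᵀ *ᵥ y)
    with hzdef
  have hTne : T.Nonempty := Finset.card_pos.mp (by omega)
  obtain ⟨j0, _, hj0min⟩ := Finset.exists_min_image T.attach (fun i => |z i|)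
    (Finset.attach_nonempty_iff.mpr hTne)
  refine ⟨j0.1, j0.2, ?_⟩
  have hT'k : (T.erase j0.1).card ≤ 2 * k :=
    le_trans (Finset.card_le_card (Finset.erase_subset _ _)) hTk
  have hdT' := gram_unit_det hδ1 hRIP hT'k
  set u := residT M (T.erase j0.1) *ᵥ (fun r => M r j0.1) with hudef
  have hid : u ⬝ᵥ y = z j0 * (u ⬝ᵥ u) := by
    have h := resid_dot_eq j0.2 hdT hdT' y
    rw [← hzdef] at h
    exact h
  have huu0 : 0 ≤ u ⬝ᵥ u := dot_self_nonneg u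
  have huu1 : u ⬝ᵥ u ≤ 1 := uu_le_one (hunit j0.1) j0.2 hdT'
  have hsq : 0 < Real.sqrt ((k:ℝ) * (1 - δ)) := by
    apply Real.sqrt_pos.mpr
    have : (0:ℝ) < (k:ℝ) := by exact_mod_cast hk
    nlinarith
  set D := δ * nrm y0 + nrm (projT M T *ᵥ w) with hD
  have hD0 : 0 ≤ D := add_nonneg (mul_nonneg hδ0.le (nrm_nonneg _)) (nrm_nonneg _)
  have hzz : (k:ℝ) * (z j0)^2 ≤ z ⬝ᵥ z := by
    have e0 : z ⬝ᵥ z = ∑ i ∈ T.attach, z i * z i := by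
      rw [← Finset.univ_eq_attach]; rfl
    rw [e0]
    have e1 : ∀ i ∈ T.attach, (z j0)^2 ≤ z i * z i := by
      intro i hi
      have h2 := mul_self_le_mul_self (abs_nonneg (z j0)) (hj0min i hi)
      rw [abs_mul_abs_self, abs_mul_abs_self] at h2
      rw [pow_two]; exact h2
    calc (k:ℝ) * (z j0)^2 = T.attach.card • (z j0)^2 := by
          rw [Finset.card_attach, hT, nsmul_eq_mul]
      _ ≤ ∑ i ∈ T.attach, z i * z i := Finset.card_nsmul_le_sum _ _ _ e1
  have hripz : (1-δ) * (z ⬝ᵥ z) ≤ (colsOf M T *ᵥ z) ⬝ᵥ (colsOf M T *ᵥ z) := by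
    have h := (hRIP (ext0 T z) ⟨T, hTk, ext0_support T z⟩).1
    rwa [dot_ext0, mulVec_ext0] at h
  have hPy : projT M T *ᵥ y = colsOf M T *ᵥ z := by
    rw [hzdef, projT]
    simp only [Matrix.mulVec_mulVec, Matrix.mul_assoc]
  have hnrmPy : nrm (projT M T *ᵥ y) ≤ D := by
    have hsplit : projT M T *ᵥ y = projT M T *ᵥ y0 + projT M T *ᵥ w := by
      rw [hy, Matrix.mulVec_add]
    rw [hsplit]
    have hy0le : nrm (projT M T *ᵥ y0) ≤ δ * nrm y0 := by
      have hxne' : M *ᵥ x ≠ 0 := by rw [← hy0]; exact hy0ne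
      have h := proj_y0_le hδ0 hδ1 hRIP hsupp (by omega : T.card + L.card ≤ 2*k)
        hdisj hdT hxne'
      rwa [← hy0] at h
    calc nrm (projT M T *ᵥ y0 + projT M T *ᵥ w)
        ≤ nrm (projT M T *ᵥ y0) + nrm (projT M T *ᵥ w) := nrm_add_le _ _
      _ ≤ D := add_le_add_left hy0le _
  have hkey : |z j0| * Real.sqrt ((k:ℝ)*(1-δ)) ≤ D := by
    have hd2 : (nrm (colsOf M T *ᵥ z))^2 ≤ D^2 := by
      rw [← hPy]
      exact pow_le_pow_left₀ (nrm_nonneg _) hnrmPy 2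
    rw [nrm_sq] at hd2
    have h1 : ((k:ℝ)*(1-δ)) * (z j0)^2 ≤ D^2 := by nlinarith [hzz, hripz, hd2]
    have h2 : (|z j0| * Real.sqrt ((k:ℝ)*(1-δ)))^2 ≤ D^2 := by
      rw [mul_pow, Real.sq_sqrt (by nlinarith [hsq, Real.sqrt_nonneg ((k:ℝ)*(1-δ))] : (0:ℝ) ≤ (k:ℝ)*(1-δ)), sq_abs]
      nlinarith [h1]
    nlinarith [h2, mul_nonneg (abs_nonneg (z j0)) (Real.sqrt_nonneg ((k:ℝ)*(1-δ))), hD0]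
  have hfrac : |z j0| ≤ D / Real.sqrt ((k:ℝ)*(1-δ)) := (le_div_iff₀ hsq).mpr hkey
  rcases huu0.eq_or_lt with h0 | hpos
  · rw [hid, ← h0, mul_zero, abs_zero, zero_div]
    exact div_nonneg hD0 hsq.le
  · have hsqrtpos : 0 < Real.sqrt (u ⬝ᵥ u) := Real.sqrt_pos.mpr hpos
    have habs : |z j0 * (u ⬝ᵥ u)| = |z j0| * (u ⬝ᵥ u) := by
      rw [abs_mul, abs_of_pos hpos]
    have hnrmu : nrm u = Real.sqrt (u ⬝ᵥ u) := rfl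
    rw [hid, habs, hnrmu]
    have heq : |z j0| * (u ⬝ᵥ u) / Real.sqrt (u ⬝ᵥ u) = |z j0| * Real.sqrt (u ⬝ᵥ u) := by
      rw [div_eq_iff hsqrtpos.ne', mul_assoc, Real.mul_self_sqrt huu0]
    rw [heq]
    have hsle1 : Real.sqrt (u ⬝ᵥ u) ≤ 1 := by
      calc Real.sqrt (u ⬝ᵥ u) ≤ Real.sqrt 1 := Real.sqrt_le_sqrt huu1
        _ = 1 := Real.sqrt_one
    calc |z j0| * Real.sqrt (u ⬝ᵥ u) ≤ |z j0| * 1 :=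
          mul_le_mul_of_nonneg_left hsle1 (abs_nonneg _)
      _ = |z j0| := mul_one _
      _ ≤ D / Real.sqrt ((k:ℝ)*(1-δ)) := hfrac

end
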